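/- The function H is convex on ℝ and continuously differentiable, with H'(x) = λ G(-1/x) for x < 0 and H'(x) = λ m̄ for x ≥ 0. -/

import Mathlib

open MeasureTheory Filter Set
open scoped Topology

/-- The function `H` is convex on `ℝ` and continuously differentiable, with
`H'(x) = λ G(-1/x)` for `x < 0` and `H'(x) = λ m̄` for `x ≥ 0`. -/
theorem stmt_2 (f F G H : ℝ → ℝ) (mbar lam : ℝ)
    (hf_cont : Continuous f)
    (hf_nonpos : ∀ p ≤ (0 : ℝ), f p = 0)
    (hf_pos : ∀ p : ℝ, 0 < p → 0 < f p)
    (hf_int : (∫ p in Set.Ioi (0 : ℝ), f p) = 1)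
    (hf_tail : Filter.Tendsto (fun p : ℝ => p ^ 3 * f p) Filter.atTop (nhds 0))
    (hmean_int : MeasureTheory.IntegrableOn (fun p : ℝ => p * f p) (Set.Ioi 0))
    (hmbar : mbar = ∫ p in Set.Ioi (0 : ℝ), p * f p)
    (hF : ∀ b : ℝ, F b = ∫ p in (0 : ℝ)..b, f p)
    (hG : ∀ b : ℝ, G b = ∫ p in (0 : ℝ)..b, p * f p)
    (hlam : 0 < lam)
    (hHneg : ∀ x < (0 : ℝ), H x = -(lam * x) * ∫ p in (0 : ℝ)..(-1 / x), F p)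
    (hHpos : ∀ x : ℝ, 0 ≤ x → H x = lam * (1 + x * mbar)) :
    ConvexOn ℝ Set.univ H ∧
      ∃ H' : ℝ → ℝ, Continuous H' ∧ (∀ x : ℝ, HasDerivAt H (H' x) x) ∧
        (∀ x < (0 : ℝ), H' x = lam * G (-1 / x)) ∧
        (∀ x : ℝ, 0 ≤ x → H' x = lam * mbar) := by
  classical
  have hFe : F = fun b => ∫ p in (0:ℝ)..b, f p := funext hF
  have hGe : G = fun b => ∫ p in (0:ℝ)..b, p * f p := funext hG
  have hf_nn : ∀ p, 0 ≤ f p := by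
    intro p
    rcases le_or_gt p 0 with h | h
    · rw [hf_nonpos p h]
    · exact (hf_pos p h).le
  have hpf_cont : Continuous fun p : ℝ => p * f p := continuous_id.mul hf_cont
  have hpf_nn : ∀ p : ℝ, 0 ≤ p * f p := by
    intro p
    rcases le_or_gt p 0 with h | h
    · rw [hf_nonpos p h, mul_zero]
    · exact mul_nonneg h.le (hf_nn p)
  have hFd : ∀ b, HasDerivAt F (f b) b := by
    intro b; rw [hFe]
    exact (hf_cont.integral_hasStrictDerivAt 0 b).hasDerivAt
  have hFc : Continuous F := by
    rw [continuous_iff_continuousAt]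
    exact fun b => (hFd b).continuousAt
  have hGd : ∀ b, HasDerivAt G (b * f b) b := by
    intro b; rw [hGe]
    exact (hpf_cont.integral_hasStrictDerivAt 0 b).hasDerivAt
  have hGc : Continuous G := by
    rw [continuous_iff_continuousAt]
    exact fun b => (hGd b).continuousAt
  have hF0 : F 0 = 0 := by rw [hF]; simp
  set Phi : ℝ → ℝ := fun b => ∫ p in (0:ℝ)..b, F p with hPhidef
  have hPhid : ∀ b, HasDerivAt Phi (F b) b := by
    intro b
    exact (hFc.integral_hasStrictDerivAt 0 b).hasDerivAt
  have hparts : ∀ b : ℝ, G b = b * F b - Phi b := by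
    intro b
    have key := intervalIntegral.integral_mul_deriv_eq_deriv_mul_of_hasDerivAt
      (a := (0:ℝ)) (b := b) (u := fun p => p) (v := F) (u' := fun _ => (1:ℝ)) (v' := f)
      continuousOn_id hFc.continuousOn (fun x _ => hasDerivAt_id x) (fun x _ => hFd x)
      intervalIntegrable_const (hf_cont.intervalIntegrable 0 b)
    rw [hG, key, hF0]
    simp only [one_mul, mul_zero, sub_zero]
    rfl
  have hf_intOn : IntegrableOn f (Ioi (0:ℝ)) := by
    by_contra h
    rw [MeasureTheory.integral_undef h] at hf_int
    norm_num at hf_int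
  have htailF : ∀ b : ℝ, 0 < b → 1 - F b = ∫ p in Ioi b, f p := by
    intro b hb
    have hsplit : (∫ p in Ioi (0:ℝ), f p) = (∫ p in Ioc 0 b, f p) + ∫ p in Ioi b, f p := by
      rw [← MeasureTheory.setIntegral_union (Ioc_disjoint_Ioi le_rfl) measurableSet_Ioi
        (hf_intOn.mono_set Ioc_subset_Ioi_self) (hf_intOn.mono_set (Ioi_subset_Ioi hb.le)),
        Ioc_union_Ioi_eq_Ioi hb.le]
    have hFb : F b = ∫ p in Ioc 0 b, f p := by
      rw [hF, intervalIntegral.integral_of_le hb.le]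
    rw [hFb, ← hf_int, hsplit]; ring
  have htailG : ∀ b : ℝ, 0 < b → mbar - G b = ∫ p in Ioi b, p * f p := by
    intro b hb
    have hsplit : (∫ p in Ioi (0:ℝ), p * f p)
        = (∫ p in Ioc 0 b, p * f p) + ∫ p in Ioi b, p * f p := by
      rw [← MeasureTheory.setIntegral_union (Ioc_disjoint_Ioi le_rfl) measurableSet_Ioi
        (hmean_int.mono_set Ioc_subset_Ioi_self) (hmean_int.mono_set (Ioi_subset_Ioi hb.le)),
        Ioc_union_Ioi_eq_Ioi hb.le]
    have hGb : G b = ∫ p in Ioc 0 b, p * f p := by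
      rw [hG, intervalIntegral.integral_of_le hb.le]
    rw [hGb, hmbar, hsplit]; ring
  have hGlim : Tendsto G atTop (𝓝 mbar) := by
    rw [hGe, hmbar]
    exact MeasureTheory.intervalIntegral_tendsto_integral_Ioi 0 hmean_int tendsto_id
  have hG_mono : Monotone G := by
    have hdiff : Differentiable ℝ G := fun b => (hGd b).differentiableAt
    apply monotone_of_deriv_nonneg hdiff
    intro x; rw [(hGd x).deriv]; exact hpf_nn x
  have hG_le : ∀ b, G b ≤ mbar := fun b => hG_mono.ge_of_tendsto hGlim b
  have hbF : Tendsto (fun b => b * (1 - F b)) atTop (𝓝 0) := by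
    have h0 : Tendsto (fun b => mbar - G b) atTop (𝓝 0) := by
      have := hGlim.const_sub mbar
      simpa using this
    apply tendsto_of_tendsto_of_tendsto_of_le_of_le' tendsto_const_nhds h0
    · filter_upwards [eventually_gt_atTop (0:ℝ)] with b hb
      rw [htailF b hb]
      exact mul_nonneg hb.le (setIntegral_nonneg measurableSet_Ioi fun p _ => hf_nn p)
    · filter_upwards [eventually_gt_atTop (0:ℝ)] with b hb
      rw [htailF b hb, htailG b hb, ← MeasureTheory.integral_const_mul]
      apply MeasureTheory.setIntegral_mono_on
      · exact (hf_intOn.mono_set (Ioi_subset_Ioi hb.le)).const_mul b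
      · exact hmean_int.mono_set (Ioi_subset_Ioi hb.le)
      · exact measurableSet_Ioi
      · intro p hp
        exact mul_le_mul_of_nonneg_right (le_of_lt hp) (hf_nn p)
  set H' : ℝ → ℝ := fun x => if x < 0 then lam * G (-1/x) else lam * mbar with hH'def
  have hDneg : ∀ x : ℝ, x < 0 → HasDerivAt H (lam * G (-1/x)) x := by
    intro x hx
    have hxne : x ≠ 0 := ne_of_lt hx
    have h1 : HasDerivAt (fun y : ℝ => -1/y) (1/x^2) x := by
      simpa [neg_div, one_div] using (hasDerivAt_inv hxne).fun_neg
    have hcomp : HasDerivAt (fun y : ℝ => Phi (-1/y)) (F (-1/x) * (1/x^2)) x :=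
      (hPhid (-1/x)).comp x h1
    have hlin : HasDerivAt (fun y : ℝ => -(lam * y)) (-lam) x := by
      simpa using ((hasDerivAt_id x).const_mul lam).fun_neg
    have hmul : HasDerivAt (fun y : ℝ => -(lam * y) * Phi (-1/y))
        (-lam * Phi (-1/x) + -(lam * x) * (F (-1/x) * (1/x^2))) x := hlin.mul hcomp
    have heq : H =ᶠ[𝓝 x] fun y : ℝ => -(lam * y) * Phi (-1/y) := by
      filter_upwards [Iio_mem_nhds hx] with y hy
      rw [hHneg y hy, hPhidef]
    have hD := hmul.congr_of_eventuallyEq heq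
    have hval : -lam * Phi (-1/x) + -(lam * x) * (F (-1/x) * (1/x^2)) = lam * G (-1/x) := by
      rw [hparts (-1/x)]
      field_simp
      ring
    rwa [hval] at hD
  have hDpos : ∀ x : ℝ, 0 < x → HasDerivAt H (lam * mbar) x := by
    intro x hx
    have hlin : HasDerivAt (fun y : ℝ => lam * (1 + y * mbar)) (lam * mbar) x := by
      simpa using (((hasDerivAt_id x).mul_const mbar).const_add 1).const_mul lam
    apply hlin.congr_of_eventuallyEq
    filter_upwards [Ioi_mem_nhds hx] with y hy
    exact hHpos y (le_of_lt hy)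
  have hneg : Tendsto (fun x : ℝ => -1/x) (𝓝[<] (0:ℝ)) atTop := by
    have h1 : Tendsto (fun x : ℝ => -x) (𝓝[<] (0:ℝ)) (𝓝[>] (0:ℝ)) := by
      simpa using tendsto_neg_nhdsLT (a := (0:ℝ))
    have h2 := tendsto_inv_nhdsGT_zero.comp h1
    refine h2.congr fun x => ?_
    simp [Function.comp, neg_div, one_div, inv_neg]
  have hD0 : HasDerivAt H (lam * mbar) 0 := by
    rw [hasDerivAt_iff_tendsto_slope]
    rw [← nhdsLT_sup_nhdsGT (0:ℝ), tendsto_sup]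
    constructor
    · have key : Tendsto (fun b : ℝ => lam * (b * (1 - F b) + G b)) atTop (𝓝 (lam * mbar)) := by
        have := (hbF.add hGlim).const_mul lam
        simpa using this
      have h2 := key.comp hneg
      apply h2.congr'
      filter_upwards [self_mem_nhdsWithin] with x hx
      have hx : x < 0 := hx
      have hxne : x ≠ 0 := ne_of_lt hx
      simp only [Function.comp_apply, slope_def_field, hHneg x hx, hHpos 0 le_rfl,
        hparts (-1/x)]
      simp only [hPhidef]
      field_simp
      ring
    · apply Tendsto.congr' _ (tendsto_const_nhds (x := lam * mbar))
      filter_upwards [self_mem_nhdsWithin] with x hx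
      have hx : (0:ℝ) < x := hx
      simp only [slope_def_field, hHpos x hx.le, hHpos 0 le_rfl]
      field_simp
      rw [mul_zero, add_zero, sub_zero, add_sub_cancel_left, mul_div_cancel_right₀ _ hx.ne']
  have hDall : ∀ x : ℝ, HasDerivAt H (H' x) x := by
    intro x
    rcases lt_trichotomy x 0 with hx | hx | hx
    · rw [hH'def]; simp only [if_pos hx]; exact hDneg x hx
    · subst hx
      rw [hH'def]; simp only [lt_irrefl, if_false]; exact hD0
    · rw [hH'def]; simp only [if_neg (not_lt.2 hx.le)]; exact hDpos x hx
  have hGlim' : Tendsto (fun x : ℝ => lam * G (-1/x)) (𝓝[<] (0:ℝ)) (𝓝 (lam * mbar)) := by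
    have := (hGlim.comp hneg).const_mul lam
    simpa [Function.comp] using this
  have hH'cont : Continuous H' := by
    rw [continuous_iff_continuousAt]
    intro x
    rcases lt_trichotomy x 0 with hx | hx | hx
    · have hc : ContinuousAt (fun y : ℝ => lam * G (-1/y)) x := by
        apply continuousAt_const.mul
        apply hGc.continuousAt.comp
        exact ContinuousAt.div continuousAt_const continuousAt_id (ne_of_lt hx)
      apply hc.congr
      filter_upwards [Iio_mem_nhds hx] with y hy
      rw [hH'def]
      simp only [if_pos (show y < (0:ℝ) from hy)]
    · subst hx
      have hH'0 : H' 0 = lam * mbar := by rw [hH'def]; simp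
      rw [ContinuousAt, hH'0, ← nhdsLT_sup_nhdsGE (0:ℝ), tendsto_sup]
      constructor
      · apply hGlim'.congr'
        filter_upwards [self_mem_nhdsWithin] with y hy
        have hy : y < 0 := hy
        rw [hH'def]; simp only [if_pos hy]
      · apply Tendsto.congr' _ tendsto_const_nhds
        filter_upwards [self_mem_nhdsWithin] with y hy
        have hy : (0:ℝ) ≤ y := hy
        rw [hH'def]; simp only [if_neg (not_lt.2 hy)]
    · have hc : ContinuousAt (fun _ : ℝ => lam * mbar) x := continuousAt_const
      apply hc.congr
      filter_upwards [Ioi_mem_nhds hx] with y hy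
      rw [hH'def]; simp only [if_neg (not_lt.2 (le_of_lt (show (0:ℝ) < y from hy)))]
  have hH'mono : Monotone H' := by
    intro a b hab
    rw [hH'def]
    dsimp only
    rcases lt_or_ge a 0 with ha | ha
    · rcases lt_or_ge b 0 with hb | hb
      · rw [if_pos ha, if_pos hb]
        apply mul_le_mul_of_nonneg_left _ hlam.le
        apply hG_mono
        have h1 : (1:ℝ)/b ≤ 1/a := one_div_le_one_div_of_neg_of_le hb hab
        have := neg_le_neg h1
        simpa [neg_div] using this
      · rw [if_pos ha, if_neg (not_lt.2 hb)]
        exact mul_le_mul_of_nonneg_left (hG_le _) hlam.le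
    · rw [if_neg (not_lt.2 ha), if_neg (not_lt.2 (le_trans ha hab))]
  have hdiffH : Differentiable ℝ H := fun x => (hDall x).differentiableAt
  have hderiv : deriv H = H' := funext fun x => (hDall x).deriv
  refine ⟨Monotone.convexOn_univ_of_deriv hdiffH (hderiv ▸ hH'mono), H', hH'cont, hDall, ?_, ?_⟩
  · intro x hx
    rw [hH'def]; simp only [if_pos hx]
  · intro x hx
    rw [hH'def]; simp only [if_neg (not_lt.2 hx)]
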